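/- If ∫_{u>1} du/√(W(u)) = ∞ and ∫_{u<−1} du/√(W(u)) = ∞, then every maximal solution of u'' = W'(u) is defined on all of ℝ. -/

import Mathlib

open MeasureTheory Set Metric


variable {E : Type*} [NormedAddCommGroup E] [NormedSpace ℝ E] [ProperSpace E]

lemma lip_on_ball {v : E → E} (hv : ContDiff ℝ 1 v) (M : ℝ) :
    ∃ K : NNReal, LipschitzOnWith K v (closedBall 0 M) := by
  have hc : ContinuousOn (fun x => fderiv ℝ v x) (closedBall 0 M) :=
    (hv.continuous_fderiv one_ne_zero).continuousOn
  obtain ⟨C, hC⟩ := (isCompact_closedBall (0:E) M).exists_bound_of_continuousOn hc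
  refine ⟨C.toNNReal, (convex_closedBall _ _).lipschitzOnWith_of_nnnorm_fderiv_le
    (fun x _ => hv.differentiable one_ne_zero x) (fun x hx => ?_)⟩
  have h1 : ‖fderiv ℝ v x‖ ≤ ((C.toNNReal : NNReal) : ℝ) := (hC x hx).trans (Real.le_coe_toNNReal C)
  exact_mod_cast h1

/-- Uniqueness of solutions to a C¹ autonomous ODE on an open interval. -/
lemma ODE_uniq {v : E → E} (hv : ContDiff ℝ 1 v) {f g : ℝ → E} {α β t₀ : ℝ}
    (ht₀ : t₀ ∈ Ioo α β)
    (hf : ∀ t ∈ Ioo α β, HasDerivAt f (v (f t)) t)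
    (hg : ∀ t ∈ Ioo α β, HasDerivAt g (v (g t)) t)
    (heq : f t₀ = g t₀) : EqOn f g (Ioo α β) := by
  intro t ht
  obtain ⟨α', hα1, hα2⟩ := exists_between (lt_min ht.1 ht₀.1)
  obtain ⟨β', hβ1, hβ2⟩ := exists_between (max_lt ht.2 ht₀.2)
  have hsub : Icc α' β' ⊆ Ioo α β := fun s hs =>
    ⟨hα1.trans_le hs.1, lt_of_le_of_lt hs.2 hβ2⟩
  have hsub' : Ioo α' β' ⊆ Ioo α β := Ioo_subset_Icc_self.trans hsub
  have hfc : ContinuousOn f (Icc α' β') := fun s hs =>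
    ((hf s (hsub hs)).continuousAt).continuousWithinAt
  have hgc : ContinuousOn g (Icc α' β') := fun s hs =>
    ((hg s (hsub hs)).continuousAt).continuousWithinAt
  obtain ⟨Mf, hMf⟩ := (isCompact_Icc (a := α') (b := β')).exists_bound_of_continuousOn hfc
  obtain ⟨Mg, hMg⟩ := (isCompact_Icc (a := α') (b := β')).exists_bound_of_continuousOn hgc
  set M : ℝ := max Mf Mg with hM
  obtain ⟨K, hK⟩ := lip_on_ball hv M
  have ht₀' : t₀ ∈ Ioo α' β' := ⟨lt_of_lt_of_le hα2 (min_le_right _ _),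
    lt_of_le_of_lt (le_max_right t t₀) hβ1⟩
  have := ODE_solution_unique_of_mem_Icc (v := fun _ x => v x)
    (s := fun _ => closedBall (0:E) M) (fun _ _ => hK) ht₀' hfc
    (fun s hs => hf s (hsub' hs))
    (fun s hs => by
      simp only [mem_closedBall, dist_zero_right]
      exact (hMf s (Ioo_subset_Icc_self hs)).trans (le_max_left _ _)) hgc
    (fun s hs => hg s (hsub' hs))
    (fun s hs => by
      simp only [mem_closedBall, dist_zero_right]
      exact (hMg s (Ioo_subset_Icc_self hs)).trans (le_max_right _ _)) heq
  exact this ⟨(lt_of_lt_of_le hα2 (min_le_left _ _)).le, (le_max_left t t₀).trans hβ1.le⟩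


variable {E : Type*} [NormedAddCommGroup E] [NormedSpace ℝ E] [ProperSpace E] [CompleteSpace E]


/-- Uniform local existence from any initial point in a ball. -/
lemma ODE_unif_loc {v : E → E} (hv : ContDiff ℝ 1 v) (R : ℝ) :
    ∃ δ > (0:ℝ), ∀ (t₁ : ℝ) (z : E), ‖z‖ ≤ R →
      ∃ g : ℝ → E, g t₁ = z ∧ ∀ t ∈ Ioo (t₁ - δ) (t₁ + δ), HasDerivAt g (v (g t)) t := by
  obtain ⟨C₀, hC₀⟩ := (isCompact_closedBall (0:E) (R+1)).exists_bound_of_continuousOn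
    (hv.continuous.continuousOn (s := closedBall 0 (R+1)))
  set C : ℝ := max C₀ 0 with hC
  obtain ⟨K, hK⟩ := lip_on_ball hv (R+1)
  refine ⟨1/(C+1), by positivity, fun t₁ z hz => ?_⟩
  have hball : closedBall z 1 ⊆ closedBall 0 (R+1) := fun x hx => by
    simp only [mem_closedBall, dist_zero_right] at *
    have h1 : ‖x - z‖ ≤ 1 := mem_closedBall_iff_norm.mp hx
    calc ‖x‖ = ‖x - z + z‖ := by rw [sub_add_cancel]
    _ ≤ ‖x - z‖ + ‖z‖ := norm_add_le _ _
    _ ≤ R + 1 := by linarith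
  have ht₁I : t₁ ∈ Icc (t₁ - 1/(C+1)) (t₁ + 1/(C+1)) := by
    constructor <;> linarith [one_div_pos.mpr (by positivity : (0:ℝ) < C+1)]
  have hC0' : 0 ≤ C := le_max_right _ _
  have hpl : IsPicardLindelof (fun _ => v)
      (⟨t₁, ht₁I⟩ : Icc (t₁ - 1/(C+1)) (t₁ + 1/(C+1))) z 1 0 C.toNNReal K := by
    constructor
    · exact fun t _ => hK.mono hball
    · exact fun x _ => continuousOn_const
    · exact fun t _ x hx => (le_max_of_le_left (hC₀ x (hball hx))).trans (Real.le_coe_toNNReal C)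
    · have hC0 : 0 ≤ C := le_max_right _ _
      have : max (t₁ + 1/(C+1) - t₁) (t₁ - (t₁ - 1/(C+1))) = 1/(C+1) := by
        rw [add_sub_cancel_left, sub_sub_cancel, max_self]
      simp only [tsub_zero, NNReal.coe_one, NNReal.coe_zero, sub_zero, Real.coe_toNNReal _ hC0]
      rw [this]
      rw [div_eq_mul_inv, one_mul, ← div_eq_mul_inv]
      rw [div_le_one (by positivity)]
      linarith
  obtain ⟨g, hg0, hg⟩ := hpl.exists_eq_forall_mem_Icc_hasDerivWithinAt₀
  exact ⟨g, hg0, fun t ht =>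
    (hg t (Ioo_subset_Icc_self ht)).hasDerivAt (Icc_mem_nhds ht.1 ht.2)⟩


variable {W : ℝ → ℝ}

lemma W_lower (hWnn : ∀ t, 0 ≤ W t) (hWconv : ConvexOn ℝ Set.univ W)
    (hWvan : ∀ t, W t = 0 ↔ t = 0) : ∀ s : ℝ, 1 ≤ |s| → min (W 1) (W (-1)) ≤ W s := by
  intro s hs
  have hW0 : W 0 = 0 := (hWvan 0).mpr rfl
  rcases le_abs.mp hs with h | h
  · have hspos : (0:ℝ) < s := by linarith
    have ha : (0:ℝ) ≤ 1 - 1/s := by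
      rw [sub_nonneg]; exact (div_le_one hspos).mpr h
    have hb : (0:ℝ) ≤ 1/s := by positivity
    have hcvx := hWconv.2 (Set.mem_univ (0:ℝ)) (Set.mem_univ s) ha hb (by ring)
    have h3 : (1 - 1/s) • (0:ℝ) + (1/s) • s = 1 := by
      field_simp
      simp [hspos.ne']
    rw [h3] at hcvx
    simp only [smul_eq_mul, hW0, mul_zero, zero_add] at hcvx
    have h4 : 1/s * W s ≤ W s := by
      have := hWnn s
      nlinarith [(div_le_one hspos).mpr h]
    exact (min_le_left _ _).trans (hcvx.trans h4)
  · have hsneg : s < 0 := by linarith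
    have hspos : (0:ℝ) < -s := by linarith
    have ha : (0:ℝ) ≤ 1 - 1/(-s) := by
      rw [sub_nonneg]; exact (div_le_one hspos).mpr h
    have hb : (0:ℝ) ≤ 1/(-s) := by positivity
    have hcvx := hWconv.2 (Set.mem_univ (0:ℝ)) (Set.mem_univ s) ha hb (by ring)
    have h3 : (1 - 1/(-s)) • (0:ℝ) + (1/(-s)) • s = -1 := by
      field_simp
      simp [hsneg.ne]
    rw [h3] at hcvx
    simp only [smul_eq_mul, hW0, mul_zero, zero_add] at hcvx
    have h4 : 1/(-s) * W s ≤ W s := by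
      have := hWnn s
      nlinarith [(div_le_one hspos).mpr h]
    exact (min_le_right _ _).trans (hcvx.trans h4)

lemma g_pos {c : ℝ} (hWnn : ∀ t, 0 ≤ W t) (hc : 0 ≤ c) (s : ℝ) :
    0 < Real.sqrt (2 * W s + c + 1) := by
  have := hWnn s
  apply Real.sqrt_pos.mpr; linarith

lemma g_cont {c : ℝ} (hW : ContDiff ℝ 2 W) (hWnn : ∀ t, 0 ≤ W t) (hc : 0 ≤ c) :
    Continuous (fun s => 1 / Real.sqrt (2 * W s + c + 1)) := by
  apply continuous_const.div
  · exact Real.continuous_sqrt.comp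
      (((continuous_const.mul hW.continuous).add continuous_const).add continuous_const)
  · exact fun s => (g_pos hWnn hc s).ne'

lemma not_int_g {c : ℝ} {S : Set ℝ} (hW : ContDiff ℝ 2 W) (hWnn : ∀ t, 0 ≤ W t)
    (hWconv : ConvexOn ℝ Set.univ W) (hWvan : ∀ t, W t = 0 ↔ t = 0)
    (hS : MeasurableSet S) (hSone : ∀ s ∈ S, 1 ≤ |s|)
    (hni : ¬ IntegrableOn (fun u => 1 / Real.sqrt (W u)) S) (hc : 0 ≤ c) :
    ¬ IntegrableOn (fun s => 1 / Real.sqrt (2 * W s + c + 1)) S := by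
  intro hint
  set m : ℝ := min (W 1) (W (-1)) with hm
  have hm1 : 0 < W 1 := (hWnn 1).lt_of_ne' (fun h => one_ne_zero ((hWvan 1).mp h))
  have hm2 : 0 < W (-1) := (hWnn (-1)).lt_of_ne' (fun h => by
    have := (hWvan (-1)).mp h; norm_num at this)
  have hmpos : 0 < m := lt_min hm1 hm2
  have hWpos : ∀ s ∈ S, m ≤ W s := fun s hs => W_lower hWnn hWconv hWvan s (hSone s hs)
  set KK : ℝ := 2 + (c + 1) / m with hKK
  have hKKpos : 0 < KK := by positivity
  apply hni
  have hcont : ContinuousOn (fun u => 1 / Real.sqrt (W u)) S := by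
    apply ContinuousOn.div continuousOn_const
    · exact (Real.continuous_sqrt.comp (hW.continuous)).continuousOn
    · exact fun s hs => (Real.sqrt_pos.mpr (lt_of_lt_of_le hmpos (hWpos s hs))).ne'
  refine Integrable.mono' ((hint.const_mul (Real.sqrt KK))) (hcont.aestronglyMeasurable hS) ?_
  rw [ae_restrict_iff' hS]
  refine ae_of_all _ (fun s hs => ?_)
  have hWs : 0 < W s := lt_of_lt_of_le hmpos (hWpos s hs)
  have hcmp : 2 * W s + c + 1 ≤ KK * W s := by
    have h1 : c + 1 ≤ (c + 1) / m * W s := by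
      rw [div_mul_eq_mul_div, le_div_iff₀ hmpos]
      nlinarith [hWpos s hs]
    have hexp : KK * W s = 2 * W s + (c + 1) / m * W s := by rw [hKK]; ring
    rw [hexp]; linarith
  have h2 : Real.sqrt (2 * W s + c + 1) ≤ Real.sqrt KK * Real.sqrt (W s) := by
    rw [← Real.sqrt_mul hKKpos.le]
    exact Real.sqrt_le_sqrt hcmp
  rw [Real.norm_of_nonneg (by positivity)]
  have hA := Real.sqrt_pos.mpr hWs
  have hB := g_pos hWnn hc s
  have hr : Real.sqrt KK * (1 / Real.sqrt (2 * W s + c + 1))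
      = Real.sqrt KK / Real.sqrt (2 * W s + c + 1) := by ring
  rw [hr, div_le_div_iff₀ hA hB, one_mul]
  linarith [h2]

lemma Phi_big_right {c : ℝ} (hW : ContDiff ℝ 2 W) (hWnn : ∀ t, 0 ≤ W t)
    (hWconv : ConvexOn ℝ Set.univ W) (hWvan : ∀ t, W t = 0 ↔ t = 0)
    (hWgrowPos : ¬ IntegrableOn (fun u => 1 / Real.sqrt (W u)) (Ioi (1:ℝ)))
    (hc : 0 ≤ c) (a M' : ℝ) :
    ∃ B : ℝ, M' < ∫ s in a..B, 1 / Real.sqrt (2 * W s + c + 1) := by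
  by_contra hcon
  push_neg at hcon
  set g : ℝ → ℝ := fun s => 1 / Real.sqrt (2 * W s + c + 1) with hg
  have hgc : Continuous g := g_cont hW hWnn hc
  have hgnn : ∀ s, 0 ≤ g s := fun s => by positivity
  have hii : ∀ x y : ℝ, IntervalIntegrable g MeasureTheory.volume x y :=
    fun x y => hgc.intervalIntegrable x y
  set I : ℝ := (∫ s in (1:ℝ)..a, g s) + M' with hI
  have hbd : ∀ n : ℕ, (∫ s in (1:ℝ)..(n:ℝ), ‖g s‖) ≤ I := by
    intro n
    have hsplit : (∫ s in (1:ℝ)..a, g s) + (∫ s in a..(n:ℝ), g s)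
        = ∫ s in (1:ℝ)..(n:ℝ), g s :=
      intervalIntegral.integral_add_adjacent_intervals (hii _ _) (hii _ _)
    have hnorm : (∫ s in (1:ℝ)..(n:ℝ), ‖g s‖) = ∫ s in (1:ℝ)..(n:ℝ), g s := by
      apply intervalIntegral.integral_congr
      exact fun s _ => Real.norm_of_nonneg (hgnn s)
    rw [hnorm, ← hsplit]
    have := hcon (n : ℝ)
    linarith
  have hint : IntegrableOn g (Ioi (1:ℝ)) := by
    refine MeasureTheory.integrableOn_Ioi_of_intervalIntegral_norm_bounded I 1
      (fun n : ℕ => hgc.integrableOn_Ioc) tendsto_natCast_atTop_atTop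
      (Filter.Eventually.of_forall hbd)
  exact not_int_g hW hWnn hWconv hWvan measurableSet_Ioi
    (fun s hs => by rw [abs_of_pos (lt_trans one_pos hs)]; exact le_of_lt hs)
    hWgrowPos hc hint

lemma Phi_big_left {c : ℝ} (hW : ContDiff ℝ 2 W) (hWnn : ∀ t, 0 ≤ W t)
    (hWconv : ConvexOn ℝ Set.univ W) (hWvan : ∀ t, W t = 0 ↔ t = 0)
    (hWgrowNeg : ¬ IntegrableOn (fun u => 1 / Real.sqrt (W u)) (Iio (-1:ℝ)))
    (hc : 0 ≤ c) (a M' : ℝ) :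
    ∃ B : ℝ, (∫ s in a..B, 1 / Real.sqrt (2 * W s + c + 1)) < M' := by
  by_contra hcon
  push_neg at hcon
  set g : ℝ → ℝ := fun s => 1 / Real.sqrt (2 * W s + c + 1) with hg
  have hgc : Continuous g := g_cont hW hWnn hc
  have hgnn : ∀ s, 0 ≤ g s := fun s => by positivity
  have hii : ∀ x y : ℝ, IntervalIntegrable g MeasureTheory.volume x y :=
    fun x y => hgc.intervalIntegrable x y
  set I : ℝ := (∫ s in a..(-1:ℝ), g s) - M' with hI
  have hbd : ∀ n : ℕ, (∫ s in (-(n:ℝ))..(-1:ℝ), ‖g s‖) ≤ I := by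
    intro n
    have hsplit : (∫ s in (-(n:ℝ))..a, g s) + (∫ s in a..(-1:ℝ), g s)
        = ∫ s in (-(n:ℝ))..(-1:ℝ), g s :=
      intervalIntegral.integral_add_adjacent_intervals (hii _ _) (hii _ _)
    have hnorm : (∫ s in (-(n:ℝ))..(-1:ℝ), ‖g s‖) = ∫ s in (-(n:ℝ))..(-1:ℝ), g s := by
      apply intervalIntegral.integral_congr
      exact fun s _ => Real.norm_of_nonneg (hgnn s)
    have hrev : (∫ s in (-(n:ℝ))..a, g s) = -∫ s in a..(-(n:ℝ)), g s :=
      (intervalIntegral.integral_symm a _)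
    have := hcon (-(n:ℝ))
    rw [hnorm, ← hsplit, hrev]
    linarith
  have hint : IntegrableOn g (Iic (-1:ℝ)) := by
    refine MeasureTheory.integrableOn_Iic_of_intervalIntegral_norm_bounded I (-1)
      (fun n : ℕ => hgc.integrableOn_Ioc)
      (Filter.tendsto_neg_atTop_atBot.comp tendsto_natCast_atTop_atTop)
      (Filter.Eventually.of_forall hbd)
  exact not_int_g hW hWnn hWconv hWvan measurableSet_Iio
    (fun s hs => by
      rw [abs_of_neg (lt_trans hs (by norm_num))]
      simp only [mem_Iio] at hs; linarith)
    hWgrowNeg hc (hint.mono_set Iio_subset_Iic_self)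

lemma const_on_Ioo {h : ℝ → ℝ} {α β : ℝ} (hd : ∀ t ∈ Ioo α β, HasDerivAt h 0 t) :
    ∀ s ∈ Ioo α β, ∀ t ∈ Ioo α β, h s = h t := by
  have key : ∀ s t : ℝ, s ∈ Ioo α β → t ∈ Ioo α β → s ≤ t → h t = h s := by
    intro s t hs ht hst
    have hsub : Icc s t ⊆ Ioo α β := fun x hx => ⟨hs.1.trans_le hx.1, hx.2.trans_lt ht.2⟩
    exact constant_of_has_deriv_right_zero
      (fun x hx => (hd x (hsub hx)).continuousAt.continuousWithinAt)
      (fun x hx => (hd x (hsub (Ico_subset_Icc_self hx))).hasDerivWithinAt) t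
      ⟨hst, le_refl t⟩
  intro s hs t ht
  rcases le_total s t with hst | hst
  · exact (key s t hs ht hst).symm
  · exact key t s ht hs hst

lemma apriori (hW : ContDiff ℝ 2 W) (hWnn : ∀ t, 0 ≤ W t)
    (hWconv : ConvexOn ℝ Set.univ W) (hWvan : ∀ t, W t = 0 ↔ t = 0)
    (hWgrowPos : ¬ IntegrableOn (fun u => 1 / Real.sqrt (W u)) (Ioi (1:ℝ)))
    (hWgrowNeg : ¬ IntegrableOn (fun u => 1 / Real.sqrt (W u)) (Iio (-1:ℝ)))
    (x₀ a b M : ℝ) :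
    ∃ R : ℝ, ∀ ε : ℝ, ε ≤ M → ∀ u w : ℝ → ℝ, u x₀ = a → w x₀ = b →
      (∀ t ∈ Ioo (x₀ - ε) (x₀ + ε), HasDerivAt u (w t) t ∧ HasDerivAt w (deriv W (u t)) t) →
      ∀ t ∈ Ioo (x₀ - ε) (x₀ + ε), |u t| ≤ R ∧ |w t| ≤ R := by
  classical
  set c : ℝ := |b ^ 2 - 2 * W a| with hc
  have hc0 : 0 ≤ c := abs_nonneg _
  set g : ℝ → ℝ := fun s => 1 / Real.sqrt (2 * W s + c + 1) with hgdef
  have hgc : Continuous g := g_cont hW hWnn hc0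
  have hgnn : ∀ s, 0 ≤ g s := fun s => by positivity
  set Φ : ℝ → ℝ := fun y => ∫ s in a..y, g s with hΦdef
  obtain ⟨Bp, hBp⟩ := Phi_big_right hW hWnn hWconv hWvan hWgrowPos hc0 a M
  obtain ⟨Bm, hBm⟩ := Phi_big_left hW hWnn hWconv hWvan hWgrowNeg hc0 a (-M)
  set R₁ : ℝ := max |Bm| |Bp| with hR₁
  have hR₁0 : 0 ≤ R₁ := le_trans (abs_nonneg _) (le_max_left _ _)
  obtain ⟨WS, hWS⟩ := (isCompact_Icc (a := -R₁) (b := R₁)).exists_bound_of_continuousOn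
    hW.continuous.continuousOn
  have hWS0 : 0 ≤ WS := le_trans (norm_nonneg _) (hWS 0 (by constructor <;> linarith))
  refine ⟨max R₁ (Real.sqrt (2 * WS + c)), fun ε hεM u w hu0 hw0 hsol t ht => ?_⟩
  have hε : 0 < ε := by
    rcases ht with ⟨h1, h2⟩; linarith
  have hx₀ : x₀ ∈ Ioo (x₀ - ε) (x₀ + ε) := by constructor <;> linarith
  set J := Ioo (x₀ - ε) (x₀ + ε) with hJ
  have hWdiff : ∀ y : ℝ, HasDerivAt W (deriv W y) y := fun y =>
    ((hW.differentiable (by norm_num)) y).hasDerivAt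
  -- energy conservation
  set E : ℝ → ℝ := fun s => (w s) ^ 2 - 2 * W (u s) with hE
  have hEd : ∀ s ∈ J, HasDerivAt E 0 s := by
    intro s hs
    have h1 : HasDerivAt (fun s => (w s) ^ 2) (2 * w s * deriv W (u s)) s := by
      have := ((hsol s hs).2.mul (hsol s hs).2)
      have h2 : HasDerivAt (fun s => w s * w s)
          (deriv W (u s) * w s + w s * deriv W (u s)) s := this
      have h3 : (fun s => w s * w s) = fun s => (w s) ^ 2 := by funext x; ring
      rw [h3] at h2
      convert h2 using 1; ring
    have h4 : HasDerivAt (fun s => W (u s)) (deriv W (u s) * w s) s :=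
      (hWdiff (u s)).comp s (hsol s hs).1
    have h5 := h1.sub (h4.const_mul 2)
    rw [show (0:ℝ) = 2 * w s * deriv W (u s) - 2 * (deriv W (u s) * w s) by ring]; exact h5
  have hEconst : ∀ s ∈ J, E s = b ^ 2 - 2 * W a := by
    intro s hs
    have := const_on_Ioo hEd s hs x₀ hx₀
    rw [this]; simp only [hE, hu0, hw0]
  have hw2 : ∀ s ∈ J, (w s) ^ 2 ≤ 2 * W (u s) + c := by
    intro s hs
    have h1 := hEconst s hs
    have h2 : b ^ 2 - 2 * W a ≤ c := le_abs_self _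
    simp only [hE] at h1
    linarith
  -- derivative of Φ ∘ u
  have hΦd : ∀ y : ℝ, HasDerivAt Φ (g y) y := fun y =>
    intervalIntegral.integral_hasDerivAt_right (hgc.intervalIntegrable _ _)
      (hgc.stronglyMeasurableAtFilter _ _) hgc.continuousAt
  have hψd : ∀ s ∈ J, HasDerivAt (fun s => Φ (u s)) (g (u s) * w s) s := fun s hs =>
    (hΦd (u s)).comp s (hsol s hs).1
  have hbound : ∀ s ∈ J, ‖g (u s) * w s‖ ≤ 1 := by
    intro s hs
    have hD : 0 < Real.sqrt (2 * W (u s) + c + 1) := g_pos hWnn hc0 (u s)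
    have h1 : |w s| ≤ Real.sqrt (2 * W (u s) + c + 1) := by
      rw [← Real.sqrt_sq_eq_abs]
      apply Real.sqrt_le_sqrt
      linarith [hw2 s hs]
    rw [norm_mul, Real.norm_of_nonneg (hgnn (u s)), Real.norm_eq_abs]
    rw [hgdef]
    simp only [one_div]
    rw [inv_mul_eq_div, div_le_one hD]
    exact h1
  -- MVT
  have hmvt := Convex.norm_image_sub_le_of_norm_hasDerivWithin_le
    (fun s hs => (hψd s hs).hasDerivWithinAt) hbound (convex_Ioo _ _) hx₀ ht
  have hψx₀ : Φ (u x₀) = 0 := by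
    simp only [hΦdef, hu0, intervalIntegral.integral_same]
  rw [hψx₀, sub_zero, one_mul, Real.norm_eq_abs, Real.norm_eq_abs] at hmvt
  have htx : |t - x₀| ≤ M := by
    rcases ht with ⟨h1, h2⟩
    rw [abs_le]; constructor <;> linarith
  have hΦut : |Φ (u t)| ≤ M := hmvt.trans htx
  -- confinement
  have hBp' : M < Φ Bp := by simp only [hΦdef, hgdef]; exact hBp
  have hBm' : Φ Bm < -M := by simp only [hΦdef, hgdef]; exact hBm
  have hut_up : u t ≤ Bp := by
    by_contra hcon
    push_neg at hcon
    have hsplit : Φ Bp + (∫ s in Bp..(u t), g s) = Φ (u t) :=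
      intervalIntegral.integral_add_adjacent_intervals
        (hgc.intervalIntegrable _ _) (hgc.intervalIntegrable _ _)
    have hpos : 0 ≤ ∫ s in Bp..(u t), g s :=
      intervalIntegral.integral_nonneg hcon.le (fun s _ => hgnn s)
    have : M < Φ (u t) := by rw [← hsplit]; linarith [hBp']
    linarith [(abs_le.mp hΦut).2]
  have hut_lo : Bm ≤ u t := by
    by_contra hcon
    push_neg at hcon
    have hsplit : Φ (u t) + (∫ s in (u t)..Bm, g s) = Φ Bm :=
      intervalIntegral.integral_add_adjacent_intervals
        (hgc.intervalIntegrable _ _) (hgc.intervalIntegrable _ _)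
    have hpos : 0 ≤ ∫ s in (u t)..Bm, g s :=
      intervalIntegral.integral_nonneg hcon.le (fun s _ => hgnn s)
    have : Φ (u t) < -M := by
      have h6 := hBm'; rw [← hsplit] at h6; linarith
    linarith [(abs_le.mp hΦut).1]
  have huR : |u t| ≤ R₁ := by
    rw [abs_le]
    constructor
    · calc -R₁ ≤ -|Bm| := by simp [hR₁]
      _ ≤ Bm := neg_abs_le _
      _ ≤ u t := hut_lo
    · exact hut_up.trans ((le_abs_self _).trans (le_max_right _ _))
  refine ⟨huR.trans (le_max_left _ _), ?_⟩
  have hWut : W (u t) ≤ WS := by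
    have := hWS (u t) (abs_le.mp huR |> fun h => ⟨h.1, h.2⟩)
    exact (le_abs_self _).trans this
  have h2 : (w t) ^ 2 ≤ 2 * WS + c := by
    have := hw2 t ht; linarith
  have : |w t| ≤ Real.sqrt (2 * WS + c) := by
    rw [← Real.sqrt_sq_eq_abs]
    exact Real.sqrt_le_sqrt h2
  exact this.trans (le_max_right _ _)


lemma gewg_deriv_contDiff {W : ℝ → ℝ} (hW : ContDiff ℝ 2 W) : ContDiff ℝ 1 (deriv W) := by
  have h2 : ContDiff ℝ ((1:WithTop ℕ∞) + 1) W := by norm_num; exact_mod_cast hW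
  exact (contDiff_succ_iff_deriv.mp h2).2.2

lemma gewg_v_contDiff {W : ℝ → ℝ} (hW : ContDiff ℝ 2 W) :
    ContDiff ℝ 1 (fun p : ℝ × ℝ => (p.2, deriv W p.1)) :=
  contDiff_snd.prodMk ((gewg_deriv_contDiff hW).comp contDiff_fst)

lemma gewg_fst {f : ℝ → ℝ × ℝ} {p : ℝ × ℝ} {t : ℝ} (hf : HasDerivAt f p t) :
    HasDerivAt (fun s => (f s).1) p.1 t :=
  (ContinuousLinearMap.fst ℝ ℝ ℝ).hasFDerivAt.comp_hasDerivAt t hf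

lemma gewg_snd {f : ℝ → ℝ × ℝ} {p : ℝ × ℝ} {t : ℝ} (hf : HasDerivAt f p t) :
    HasDerivAt (fun s => (f s).2) p.2 t :=
  (ContinuousLinearMap.snd ℝ ℝ ℝ).hasFDerivAt.comp_hasDerivAt t hf


variable {E : Type*} [NormedAddCommGroup E] [NormedSpace ℝ E] [ProperSpace E] [CompleteSpace E]

lemma ODE_global {v : E → E} (hv : ContDiff ℝ 1 v) (x₀ : ℝ) (y₀ : E)
    (hbnd : ∀ M : ℝ, 0 < M → ∃ R : ℝ, ∀ ε : ℝ, ε ≤ M → ∀ f : ℝ → E, f x₀ = y₀ →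
      (∀ t ∈ Ioo (x₀ - ε) (x₀ + ε), HasDerivAt f (v (f t)) t) →
      ∀ t ∈ Ioo (x₀ - ε) (x₀ + ε), ‖f t‖ ≤ R) :
    ∃ f : ℝ → E, f x₀ = y₀ ∧ ∀ t, HasDerivAt f (v (f t)) t := by
  classical
  set P : ℝ → (ℝ → E) → Prop := fun ε f =>
    f x₀ = y₀ ∧ ∀ t ∈ Ioo (x₀ - ε) (x₀ + ε), HasDerivAt f (v (f t)) t with hP
  set A : Set ℝ := {ε | 0 < ε ∧ ∃ f, P ε f} with hA
  -- A is nonempty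
  obtain ⟨f₀, hf₀1, ε₀, hε₀, hf₀2⟩ := ContDiffAt.exists_forall_mem_closedBall_exists_eq_forall_mem_Ioo_hasDerivAt₀ (x₀ := y₀) hv.contDiffAt x₀
  have hε₀A : ε₀ ∈ A := ⟨hε₀, f₀, hf₀1, hf₀2⟩
  have hAne : A.Nonempty := ⟨ε₀, hε₀A⟩
  -- A is unbounded
  have hunb : ¬ BddAbove A := by
    intro hbdd
    set T : ℝ := sSup A with hT
    have hε₀T : ε₀ ≤ T := le_csSup hbdd hε₀A
    have hTpos : 0 < T := lt_of_lt_of_le hε₀ hε₀T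
    obtain ⟨R, hR⟩ := hbnd (T + 1) (by linarith)
    obtain ⟨δ, hδpos, hδ⟩ := ODE_unif_loc hv R
    set δ' : ℝ := min δ (ε₀ / 2) with hδ'
    have hδ'pos : 0 < δ' := lt_min hδpos (by linarith)
    have hδ'δ : δ' ≤ δ := min_le_left _ _
    have hδ'ε₀ : δ' ≤ ε₀ / 2 := min_le_right _ _
    obtain ⟨ε, hεA, hεlt⟩ := exists_lt_of_lt_csSup hAne (by linarith : T - δ'/4 < T)
    have hεT : ε ≤ T := le_csSup hbdd hεA
    have hε74 : 7 * δ' / 4 < ε := by linarith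
    obtain ⟨hεpos, f, hfP⟩ := hεA
    obtain ⟨hf0, hfd⟩ := hfP
    set t₁ : ℝ := x₀ + ε - δ' / 2 with ht₁
    set t₂ : ℝ := x₀ - ε + δ' / 2 with ht₂
    have ht₁mem : t₁ ∈ Ioo (x₀ - ε) (x₀ + ε) := by constructor <;> simp [ht₁] <;> linarith
    have ht₂mem : t₂ ∈ Ioo (x₀ - ε) (x₀ + ε) := by constructor <;> simp [ht₂] <;> linarith
    have hft₁ : ‖f t₁‖ ≤ R := hR ε (by linarith) f hf0 hfd t₁ ht₁mem
    have hft₂ : ‖f t₂‖ ≤ R := hR ε (by linarith) f hf0 hfd t₂ ht₂mem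
    obtain ⟨g, hg0, hgd⟩ := hδ t₁ (f t₁) hft₁
    obtain ⟨gl, hgl0, hgld⟩ := hδ t₂ (f t₂) hft₂
    -- agreement of f and g on the right overlap
    have heqg : EqOn f g (Ioo (t₁ - δ') (x₀ + ε)) := by
      apply ODE_uniq hv (t₀ := t₁)
      · constructor <;> simp [ht₁] <;> linarith
      · intro s hs
        exact hfd s ⟨by simp only [ht₁] at hs; rcases hs with ⟨h1, h2⟩; linarith, hs.2⟩
      · intro s hs
        refine hgd s ⟨by rcases hs with ⟨h1, h2⟩; linarith, ?_⟩
        rcases hs with ⟨h1, h2⟩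
        simp only [ht₁] at *
        linarith
      · exact hg0.symm
    -- agreement of f and gl on the left overlap
    have heqgl : EqOn f gl (Ioo (x₀ - ε) (t₂ + δ')) := by
      apply ODE_uniq hv (t₀ := t₂)
      · constructor <;> simp [ht₂] <;> linarith
      · intro s hs
        exact hfd s ⟨hs.1, by simp only [ht₂] at hs; rcases hs with ⟨h1, h2⟩; linarith⟩
      · intro s hs
        rcases hs with ⟨h1, h2⟩
        refine hgld s ⟨?_, by linarith⟩
        simp only [ht₂] at *
        linarith
      · exact hgl0.symm
    -- the glued function
    set h : ℝ → E := fun s => if s < t₁ then (if t₂ < s then f s else gl s) else g s with hh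
    have hx₀t₁ : x₀ < t₁ := by simp only [ht₁]; linarith
    have ht₂x₀ : t₂ < x₀ := by simp only [ht₂]; linarith
    have hhP : P (ε + δ'/2) h := by
      constructor
      · simp only [hh, if_pos hx₀t₁, if_pos ht₂x₀]; exact hf0
      intro s hs
      have hs1 : t₂ - δ' < s := by rcases hs with ⟨h1, h2⟩; simp only [ht₂]; linarith
      have hs2 : s < t₁ + δ' := by rcases hs with ⟨h1, h2⟩; simp only [ht₁]; linarith
      rcases le_or_gt s t₂ with hc1 | hc1
      · -- left piece: h = gl near s
        set N : Set ℝ := Ioo (t₂ - δ') (min (t₂ + δ') t₁) with hN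
        have hsN : s ∈ N := ⟨hs1, lt_min (by linarith) (by linarith)⟩
        have heqN : EqOn h gl N := by
          intro x hx
          have hxt₁ : x < t₁ := lt_of_lt_of_le hx.2 (min_le_right _ _)
          rcases lt_or_ge t₂ x with hx2 | hx2
          · have : h x = f x := by simp only [hh, if_pos hxt₁, if_pos hx2]
            rw [this]
            exact heqgl ⟨by simp only [ht₂] at hx2; linarith, lt_of_lt_of_le hx.2 (min_le_left _ _)⟩
          · simp only [hh, if_pos hxt₁, if_neg (not_lt.mpr hx2)]
        have hNnhds : N ∈ nhds s := Ioo_mem_nhds hsN.1 hsN.2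
        have hev : h =ᶠ[nhds s] gl := Filter.eventually_of_mem hNnhds heqN
        have hd : HasDerivAt gl (v (gl s)) s := by
          refine hgld s ⟨by linarith, by linarith⟩
        have := hd.congr_of_eventuallyEq hev
        rwa [← heqN hsN] at this
      rcases lt_or_ge s t₁ with hc2 | hc2
      · -- middle piece: h = f near s
        set N : Set ℝ := Ioo t₂ t₁ with hN
        have hsN : s ∈ N := ⟨hc1, hc2⟩
        have heqN : EqOn h f N := by
          intro x hx
          simp only [hh, if_pos hx.2, if_pos hx.1]
        have hNnhds : N ∈ nhds s := Ioo_mem_nhds hsN.1 hsN.2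
        have hev : h =ᶠ[nhds s] f := Filter.eventually_of_mem hNnhds heqN
        have hd : HasDerivAt f (v (f s)) s := by
          refine hfd s ⟨by simp only [ht₂] at hc1; linarith, by simp only [ht₁] at hc2; linarith⟩
        have := hd.congr_of_eventuallyEq hev
        rwa [← heqN hsN] at this
      · -- right piece: h = g near s
        have ht₂t₁ : t₂ < t₁ := by simp only [ht₁, ht₂]; linarith
        set N : Set ℝ := Ioo (max t₂ (t₁ - δ')) (t₁ + δ') with hN
        have hsN : s ∈ N := ⟨lt_of_lt_of_le (max_lt ht₂t₁ (by linarith)) hc2, hs2⟩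
        have heqN : EqOn h g N := by
          intro x hx
          rcases lt_or_ge x t₁ with hx2 | hx2
          · have hxt₂ : t₂ < x := lt_of_le_of_lt (le_max_left _ _) hx.1
            have : h x = f x := by simp only [hh, if_pos hx2, if_pos hxt₂]
            rw [this]
            exact heqg ⟨lt_of_le_of_lt (le_max_right _ _) hx.1,
              by simp only [ht₁] at hx2 ⊢; linarith⟩
          · simp only [hh, if_neg (not_lt.mpr hx2)]
        have hNnhds : N ∈ nhds s := Ioo_mem_nhds hsN.1 hsN.2
        have hev : h =ᶠ[nhds s] g := Filter.eventually_of_mem hNnhds heqN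
        have hd : HasDerivAt g (v (g s)) s := by
          refine hgd s ⟨by linarith, by linarith⟩
        have := hd.congr_of_eventuallyEq hev
        rwa [← heqN hsN] at this
    have : ε + δ'/2 ≤ T := le_csSup hbdd ⟨by linarith, h, hhP⟩
    linarith
  -- build the global solution from solutions on larger and larger intervals
  have hn : ∀ n : ℕ, ∃ f : ℝ → E, f x₀ = y₀ ∧
      ∀ t ∈ Ioo (x₀ - ((n:ℝ) + 1)) (x₀ + ((n:ℝ) + 1)), HasDerivAt f (v (f t)) t := by
    intro n
    obtain ⟨ε, hεA, hεgt⟩ := not_bddAbove_iff.mp hunb ((n:ℝ) + 1)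
    obtain ⟨hεpos, f, hf0, hfd⟩ := hεA
    exact ⟨f, hf0, fun t ht => hfd t ⟨by rcases ht with ⟨h1,h2⟩; linarith,
      by rcases ht with ⟨h1,h2⟩; linarith⟩⟩
  choose F hF0 hFd using hn
  have key : ∀ m k : ℕ, m ≤ k → ∀ t ∈ Ioo (x₀ - ((m:ℝ) + 1)) (x₀ + ((m:ℝ) + 1)),
      F m t = F k t := by
    intro m k hmk
    have hx₀mem : x₀ ∈ Ioo (x₀ - ((m:ℝ) + 1)) (x₀ + ((m:ℝ) + 1)) := by
      constructor <;> [linarith [Nat.cast_nonneg (α := ℝ) m]; linarith [Nat.cast_nonneg (α := ℝ) m]]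
    have hmk' : ((m:ℝ) + 1) ≤ ((k:ℝ) + 1) := by
      have : (m:ℝ) ≤ (k:ℝ) := Nat.cast_le.mpr hmk
      linarith
    exact ODE_uniq hv hx₀mem (hFd m)
      (fun t ht => hFd k t ⟨by rcases ht with ⟨h1,h2⟩; linarith, by rcases ht with ⟨h1,h2⟩; linarith⟩)
      ((hF0 m).trans (hF0 k).symm)
  set G : ℝ → E := fun t => F (⌈|t - x₀|⌉₊) t with hG
  have hGx₀ : G x₀ = y₀ := by
    simp only [hG, sub_self, abs_zero, Nat.ceil_zero]
    exact hF0 0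
  refine ⟨G, hGx₀, fun t => ?_⟩
  set m : ℕ := ⌈|t - x₀|⌉₊ with hm
  have hloc : EqOn G (F (m + 1)) (Ioo (t - 1/2) (t + 1/2)) := by
    intro s hs
    have hsd : |s - x₀| ≤ (m:ℝ) + 1/2 := by
      have h1 : |s - x₀| ≤ |s - t| + |t - x₀| := abs_sub_le s t x₀
      have h2 : |s - t| ≤ 1/2 := by
        rw [abs_le]; rcases hs with ⟨ha, hb⟩; constructor <;> linarith
      have h3 : |t - x₀| ≤ (m:ℝ) := Nat.le_ceil _
      linarith
    set n : ℕ := ⌈|s - x₀|⌉₊ with hn'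
    have hnm : n ≤ m + 1 := by
      rw [hn']
      refine Nat.ceil_le.mpr ?_
      push_cast
      linarith
    have hsmem : s ∈ Ioo (x₀ - ((n:ℝ) + 1)) (x₀ + ((n:ℝ) + 1)) := by
      have : |s - x₀| < (n:ℝ) + 1 := lt_of_le_of_lt (Nat.le_ceil _) (by rw [← hn']; norm_num)
      rcases abs_lt.mp this with ⟨h1, h2⟩
      constructor <;> linarith
    exact key n (m + 1) hnm s hsmem
  have htmem : t ∈ Ioo (x₀ - (((m:ℝ) + 1) + 1)) (x₀ + (((m:ℝ) + 1) + 1)) := by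
    have : |t - x₀| < (m:ℝ) + 1 + 1 := lt_of_le_of_lt (Nat.le_ceil _) (by rw [← hm]; linarith)
    rcases abs_lt.mp this with ⟨h1, h2⟩
    constructor <;> [linarith; linarith]
  have hd : HasDerivAt (F (m + 1)) (v (F (m + 1) t)) t := by
    have := hFd (m + 1) t
    apply this
    convert htmem using 3 <;> push_cast <;> ring
  have htN : t ∈ Ioo (t - 1/2) (t + 1/2) := by constructor <;> linarith
  have hev : G =ᶠ[nhds t] F (m + 1) :=
    Filter.eventually_of_mem (Ioo_mem_nhds htN.1 htN.2) hloc
  have := hd.congr_of_eventuallyEq hev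
  rwa [← hloc htN] at this

open MeasureTheory Set

theorem global_existence_without_growth
    (W : ℝ → ℝ) (hW : ContDiff ℝ 2 W) (hWnn : ∀ t, 0 ≤ W t)
    (hWconv : ConvexOn ℝ Set.univ W) (hWvan : ∀ t, W t = 0 ↔ t = 0)
    (hWgrowPos : ¬ IntegrableOn (fun u => 1 / Real.sqrt (W u)) (Ioi (1:ℝ)))
    (hWgrowNeg : ¬ IntegrableOn (fun u => 1 / Real.sqrt (W u)) (Iio (-1:ℝ))) :
    ∀ x₀ a b : ℝ, ∃ u u' : ℝ → ℝ,
      u x₀ = a ∧ u' x₀ = b ∧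
      ∀ x : ℝ, HasDerivAt u (u' x) x ∧ HasDerivAt u' (deriv W (u x)) x := by
  intro x₀ a b
  set v : ℝ × ℝ → ℝ × ℝ := fun p => (p.2, deriv W p.1) with hv
  have hvc : ContDiff ℝ 1 v := gewg_v_contDiff hW
  have hbnd : ∀ M : ℝ, 0 < M → ∃ R : ℝ, ∀ ε : ℝ, ε ≤ M → ∀ f : ℝ → ℝ × ℝ, f x₀ = (a, b) →
      (∀ t ∈ Ioo (x₀ - ε) (x₀ + ε), HasDerivAt f (v (f t)) t) →
      ∀ t ∈ Ioo (x₀ - ε) (x₀ + ε), ‖f t‖ ≤ R := by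
    intro M hM
    obtain ⟨R, hR⟩ := apriori hW hWnn hWconv hWvan hWgrowPos hWgrowNeg x₀ a b M
    refine ⟨R, fun ε hε f hf0 hfd t ht => ?_⟩
    have hu0 : (fun s => (f s).1) x₀ = a := by simp only []; rw [hf0]
    have hw0 : (fun s => (f s).2) x₀ = b := by simp only []; rw [hf0]
    have hsol : ∀ s ∈ Ioo (x₀ - ε) (x₀ + ε), HasDerivAt (fun s => (f s).1) ((f s).2) s ∧
        HasDerivAt (fun s => (f s).2) (deriv W ((f s).1)) s := by
      intro s hs
      exact ⟨gewg_fst (hfd s hs), gewg_snd (hfd s hs)⟩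
    obtain ⟨h1, h2⟩ := hR ε hε _ _ hu0 hw0 hsol t ht
    rw [Prod.norm_def]
    exact max_le (by rwa [Real.norm_eq_abs]) (by rwa [Real.norm_eq_abs])
  obtain ⟨f, hf0, hfd⟩ := ODE_global hvc x₀ (a, b) hbnd
  refine ⟨fun x => (f x).1, fun x => (f x).2, by simp only []; rw [hf0], by simp only []; rw [hf0], fun x => ?_⟩
  exact ⟨gewg_fst (hfd x), gewg_snd (hfd x)⟩
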